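/- Let θ be a reflexive and transitive binary relation on {1, 2, ..., n} and let R be a commutative ring. If A ∈ M_n(θ,R), then the classical adjugate matrix adj(A) belongs to M_n(θ,R). -/

import Mathlib

/-- Let `θ` be a reflexive and transitive binary relation on `{1, …, n}` and let `R` be
a commutative ring.  If `A ∈ Mₙ(θ,R)`, then the classical adjugate (adjoint) matrix
`adj(A)` belongs to `Mₙ(θ,R)`. -/
theorem stmt_17 {R : Type*} [CommRing R] {n : ℕ}
    (θ : Fin n → Fin n → Prop)
    (hrefl : ∀ i, θ i i) (htrans : ∀ i j k, θ i j → θ j k → θ i k)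
    (A : Matrix (Fin n) (Fin n) R)
    (hA : ∀ i j, ¬ θ i j → A i j = 0) :
    ∀ r s, ¬ θ r s → A.adjugate r s = 0 := by
  intro r s hrs
  rw [Matrix.adjugate_apply, Matrix.det_apply]
  apply Finset.sum_eq_zero
  intro σ _
  suffices h : ∏ i, (A.updateRow s (Pi.single r 1)) (σ i) i = 0 by
    rw [h, smul_zero]
  by_contra hp
  have hne : ∀ i, (A.updateRow s (Pi.single r 1)) (σ i) i ≠ 0 := by
    intro i hi
    exact hp (Finset.prod_eq_zero (Finset.mem_univ i) hi)
  have hσr : σ r = s := by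
    by_contra hsr
    have h1 := hne (σ⁻¹ s)
    rw [Equiv.Perm.inv_def, Equiv.apply_symm_apply, Matrix.updateRow_self] at h1
    apply h1
    rw [Pi.single_apply, if_neg]
    intro he
    exact hsr (by rw [← he, Equiv.apply_symm_apply])
  have hθ : ∀ i, i ≠ r → θ (σ i) i := by
    intro i hi
    have hsi : σ i ≠ s := fun he => hi (σ.injective (he.trans hσr.symm))
    have h1 := hne i
    rw [Matrix.updateRow_ne hsi] at h1
    by_contra hθi
    exact h1 (hA _ _ hθi)
  have key : ∀ k : ℕ, θ ((σ ^ k) s) s ∨ θ r s := by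
    intro k
    induction k with
    | zero => exact Or.inl (by simpa using hrefl s)
    | succ k ih =>
      rcases ih with h1 | h1
      · rcases eq_or_ne ((σ ^ k) s) r with he | he
        · exact Or.inr (he ▸ h1)
        · left
          have h2 := hθ ((σ ^ k) s) he
          rw [pow_succ', Equiv.Perm.mul_apply]
          exact htrans _ _ _ h2 h1
      · exact Or.inr h1
  have hmpos : 0 < orderOf σ := orderOf_pos σ
  have hpow : (σ ^ (orderOf σ - 1)) s = r := by
    have h1 : σ ^ (orderOf σ - 1) * σ = 1 := by
      rw [← pow_succ, Nat.sub_add_cancel hmpos, pow_orderOf_eq_one]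
    have h2 : σ ^ (orderOf σ - 1) = σ⁻¹ := by
      rw [eq_inv_iff_mul_eq_one]; exact h1
    rw [h2, ← hσr, Equiv.Perm.inv_def, Equiv.symm_apply_apply]
  rcases key (orderOf σ - 1) with h | h
  · rw [hpow] at h; exact hrs h
  · exact hrs h
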